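/- Let D_B, D_E be M×M diagonal complex matrices with diagonal entries H_B(f_m), H_E(f_m), all nonzero. Then sup over diagonal PSD matrices R with tr(R) ≤ P of log det(I + D_B R D_Bᴴ) − log det(I + D_E R D_Eᴴ) tends, as P → ∞, to Σ_{m=1}^M [log(|H_B(f_m)|²/|H_E(f_m)|²)]⁺. -/

import Mathlib

open Matrix Filter ComplexOrder

private lemma det_re_diag {M : ℕ} (d : Fin M → ℂ) (x : Fin M → ℝ) :
    (1 + Matrix.diagonal d * Matrix.diagonal (fun m => (x m : ℂ)) *
        (Matrix.diagonal d)ᴴ).det.re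
      = ∏ m, (1 + ‖d m‖ ^ 2 * x m) := by
  rw [diagonal_conjTranspose, diagonal_mul_diagonal, diagonal_mul_diagonal,
    ← diagonal_one, diagonal_add, det_diagonal]
  have h : ∀ m, (1 + d m * (x m : ℂ) * star d m)
      = ((1 + ‖d m‖ ^ 2 * x m : ℝ) : ℂ) := by
    intro m
    have h1 : d m * (x m : ℂ) * star d m = (x m : ℂ) * (d m * star (d m)) := by
      simp only [Pi.star_apply]; ring
    rw [h1, Complex.star_def, Complex.mul_conj, Complex.normSq_eq_norm_sq]
    push_cast
    ring
  rw [Finset.prod_congr rfl (fun m _ => h m), ← Complex.ofReal_prod, Complex.ofReal_re]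

private lemma factor_pos {b x : ℝ} (hb : 0 < b) (hx : 0 ≤ x) : 0 < 1 + b * x := by
  nlinarith

private lemma g_le {b e : ℝ} (hb : 0 < b) (he : 0 < e) {x : ℝ} (hx : 0 ≤ x) :
    Real.log (1 + b * x) - Real.log (1 + e * x) ≤ max (Real.log (b / e)) 0 := by
  rcases le_or_gt b e with hbe | hbe
  · have : Real.log (1 + b * x) ≤ Real.log (1 + e * x) :=
      Real.log_le_log (factor_pos hb hx) (by nlinarith)
    have := le_max_right (Real.log (b / e)) (0 : ℝ)
    linarith
  · refine le_trans ?_ (le_max_left _ _)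
    rw [Real.log_div hb.ne' he.ne']
    have h1 : Real.log (1 + b * x) + Real.log e ≤ Real.log b + Real.log (1 + e * x) := by
      rw [← Real.log_mul (factor_pos hb hx).ne' he.ne',
        ← Real.log_mul hb.ne' (factor_pos he hx).ne']
      exact Real.log_le_log (by positivity) (by nlinarith)
    linarith

private lemma g_tendsto {b e : ℝ} (hb : 0 < b) (he : 0 < e) :
    Tendsto (fun t => Real.log (1 + b * t) - Real.log (1 + e * t)) atTop
      (nhds (Real.log (b / e))) := by
  have key : Tendsto (fun t : ℝ => (t⁻¹ + b) / (t⁻¹ + e)) atTop (nhds (b / e)) := by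
    have h1 : Tendsto (fun t : ℝ => t⁻¹ + b) atTop (nhds (0 + b)) :=
      tendsto_inv_atTop_zero.add tendsto_const_nhds
    have h2 : Tendsto (fun t : ℝ => t⁻¹ + e) atTop (nhds (0 + e)) :=
      tendsto_inv_atTop_zero.add tendsto_const_nhds
    rw [zero_add] at h1 h2
    exact h1.div h2 he.ne'
  have hlog : Tendsto (fun t : ℝ => Real.log ((t⁻¹ + b) / (t⁻¹ + e))) atTop
      (nhds (Real.log (b / e))) :=
    (Real.continuousAt_log (by positivity)).tendsto.comp key
  refine hlog.congr' ?_
  filter_upwards [eventually_gt_atTop 0] with t ht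
  have htb : 0 < t⁻¹ + b := by positivity
  have hte : 0 < t⁻¹ + e := by positivity
  have e1 : t⁻¹ + b = (1 + b * t) / t := by field_simp
  have e2 : t⁻¹ + e = (1 + e * t) / t := by field_simp
  rw [Real.log_div htb.ne' hte.ne', e1, e2,
    Real.log_div (factor_pos hb ht.le).ne' ht.ne',
    Real.log_div (factor_pos he ht.le).ne' ht.ne']
  ring

/-- High-SNR CP-OFDM secrecy capacity with conventional OFDM receivers: with diagonal
channel matrices `D_B = diag(H_B(f_m))`, `D_E = diag(H_E(f_m))` (all entries nonzero),
the supremum over diagonal PSD input covariances `R` with `tr R ≤ P` of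
`log det(I + D_B R D_Bᴴ) − log det(I + D_E R D_Eᴴ)` tends, as `P → ∞`, to
`Σ_m [log(|H_B(f_m)|²/|H_E(f_m)|²)]⁺`. -/
theorem ofdm_high_snr_secrecy (M : ℕ) (dB dE : Fin M → ℂ)
    (hB : ∀ m, dB m ≠ 0) (hE : ∀ m, dE m ≠ 0) :
    Tendsto (fun P : ℝ => sSup { c : ℝ | ∃ R : Matrix (Fin M) (Fin M) ℂ,
        R.PosSemidef ∧ R.IsDiag ∧ R.trace.re ≤ P ∧
        c = Real.log ((1 + Matrix.diagonal dB * R * (Matrix.diagonal dB)ᴴ).det.re) -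
            Real.log ((1 + Matrix.diagonal dE * R * (Matrix.diagonal dE)ᴴ).det.re) })
      atTop
      (nhds (∑ m : Fin M,
        max (Real.log (‖dB m‖ ^ 2 / ‖dE m‖ ^ 2)) 0)) := by
  set b : Fin M → ℝ := fun m => ‖dB m‖ ^ 2 with hb_def
  set e : Fin M → ℝ := fun m => ‖dE m‖ ^ 2 with he_def
  have hb : ∀ m, 0 < b m := fun m => pow_pos (norm_pos_iff.mpr (hB m)) 2
  have he : ∀ m, 0 < e m := fun m => pow_pos (norm_pos_iff.mpr (hE m)) 2
  set L : ℝ := ∑ m : Fin M, max (Real.log (b m / e m)) 0 with hL_def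
  set A : ℝ → Set ℝ := fun P => { c : ℝ | ∃ R : Matrix (Fin M) (Fin M) ℂ,
        R.PosSemidef ∧ R.IsDiag ∧ R.trace.re ≤ P ∧
        c = Real.log ((1 + Matrix.diagonal dB * R * (Matrix.diagonal dB)ᴴ).det.re) -
            Real.log ((1 + Matrix.diagonal dE * R * (Matrix.diagonal dE)ᴴ).det.re) } with hA_def
  -- value for a given real diagonal allocation
  have hval : ∀ x : Fin M → ℝ, (∀ m, 0 ≤ x m) →
      Real.log ((1 + Matrix.diagonal dB * Matrix.diagonal (fun m => (x m : ℂ)) *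
          (Matrix.diagonal dB)ᴴ).det.re) -
      Real.log ((1 + Matrix.diagonal dE * Matrix.diagonal (fun m => (x m : ℂ)) *
          (Matrix.diagonal dE)ᴴ).det.re)
        = ∑ m, (Real.log (1 + b m * x m) - Real.log (1 + e m * x m)) := by
    intro x hx
    rw [det_re_diag, det_re_diag,
      Real.log_prod (fun m _ => (factor_pos (hb m) (hx m)).ne'),
      Real.log_prod (fun m _ => (factor_pos (he m) (hx m)).ne'),
      Finset.sum_sub_distrib]
  -- every element of A P is ≤ L
  have hub : ∀ P : ℝ, ∀ c ∈ A P, c ≤ L := by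
    rintro P c ⟨R, hR, hRd, -, rfl⟩
    have hdiag : ∀ m, 0 ≤ R m m := fun m => by
      exact hR.diag_nonneg
    set x : Fin M → ℝ := fun m => (R m m).re with hx_def
    have hx : ∀ m, 0 ≤ x m := fun m => by
      have := hdiag m; rw [Complex.le_def] at this; exact this.1
    have hRx : R = Matrix.diagonal (fun m => (x m : ℂ)) := by
      have hd : R.diag = fun m => ((x m : ℂ)) := by
        funext m
        have h0 := hdiag m; rw [Complex.le_def] at h0
        apply Complex.ext
        · simp [Matrix.diag, hx_def]
        · simp [Matrix.diag, hx_def, ← h0.2]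
      rw [← hRd.diagonal_diag, hd]
    rw [hRx, hval x hx]
    refine le_trans (Finset.sum_le_sum fun m _ => g_le (hb m) (he m) (hx m)) ?_
    simp [hL_def]
  have hbdd : ∀ P : ℝ, BddAbove (A P) := fun P => ⟨L, fun c hc => hub P c hc⟩
  -- the chosen allocation
  set xP : ℝ → Fin M → ℝ := fun P m => if e m < b m then P / M else 0 with hxP_def
  set V : ℝ → ℝ := fun P => ∑ m, (Real.log (1 + b m * xP P m) -
      Real.log (1 + e m * xP P m)) with hV_def
  have hmem : ∀ P : ℝ, 0 ≤ P → V P ∈ A P := by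
    intro P hP
    have hxnn : ∀ m, 0 ≤ xP P m := by
      intro m; simp only [hxP_def]; split <;> positivity
    refine ⟨Matrix.diagonal (fun m => (xP P m : ℂ)), ?_, isDiag_diagonal _, ?_, ?_⟩
    · exact PosSemidef.diagonal fun m => by
        rw [Complex.le_def]; constructor <;> simp [hxnn m]
    · rw [trace_diagonal]
      rw [Complex.re_sum]
      calc ∑ m, ((xP P m : ℂ)).re = ∑ m : Fin M, xP P m := by simp
        _ ≤ ∑ _m : Fin M, P / M := Finset.sum_le_sum fun m _ => by
            simp only [hxP_def]; split
            · exact le_refl _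
            · positivity
        _ ≤ P := by
            rw [Finset.sum_const, Finset.card_univ, Fintype.card_fin, nsmul_eq_mul]
            rcases Nat.eq_zero_or_pos M with hM | hM
            · simp [hM, hP]
            · have hM' : (M : ℝ) ≠ 0 := Nat.cast_ne_zero.mpr hM.ne'
              rw [mul_comm, div_mul_cancel₀ _ hM']
    · rw [hval _ hxnn]
  -- V tends to L
  have hVL : Tendsto V atTop (nhds L) := by
    rcases Nat.eq_zero_or_pos M with hM | hM
    · have : V = fun _ => L := by
        funext P; simp [hV_def, hL_def]
        subst hM
        simp
      rw [this]; exact tendsto_const_nhds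
    · have hdiv : Tendsto (fun P : ℝ => P / (M : ℝ)) atTop atTop :=
        tendsto_id.atTop_div_const (by exact_mod_cast hM)
      have : Tendsto (fun P => V P) atTop (nhds L) := by
        rw [hV_def, hL_def]
        simp only []
        refine tendsto_finset_sum _ fun m _ => ?_
        rcases lt_or_ge (e m) (b m) with hem | hem
        · have h1 : (fun P => Real.log (1 + b m * xP P m) -
              Real.log (1 + e m * xP P m)) =
              (fun t => Real.log (1 + b m * t) - Real.log (1 + e m * t)) ∘
                (fun P : ℝ => P / M) := by
            funext P; simp [hxP_def, hem]
          have h2 : max (Real.log (b m / e m)) 0 = Real.log (b m / e m) :=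
            max_eq_left (Real.log_nonneg (by rw [le_div_iff₀ (he m)]; linarith))
          rw [h1]
          have := (g_tendsto (hb m) (he m)).comp hdiv
          rw [h2]
          exact this
        · have h1 : (fun P => Real.log (1 + b m * xP P m) -
              Real.log (1 + e m * xP P m)) = fun _ => 0 := by
            funext P; simp [hxP_def, not_lt.mpr hem]
          have h2 : max (Real.log (b m / e m)) 0 = 0 :=
            max_eq_right (Real.log_nonpos (by positivity)
              (by rw [div_le_one (he m)]; exact hem))
          rw [h1, h2]
          exact tendsto_const_nhds
      exact this
  -- squeeze
  refine tendsto_of_tendsto_of_tendsto_of_le_of_le' hVL tendsto_const_nhds ?_ ?_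
  · filter_upwards [eventually_ge_atTop (0 : ℝ)] with P hP
    exact le_csSup (hbdd P) (hmem P hP)
  · filter_upwards [eventually_ge_atTop (0 : ℝ)] with P hP
    exact csSup_le ⟨V P, hmem P hP⟩ (hub P)
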